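/- Let X be a locally compact Hausdorff space with a Borel measure μ, A a unital C*-algebra, and a, b : X → A norm-continuous norm-bounded functions that are densities (∫ a(x)* a(x) dμ = 1 = ∫ b(x)* b(x) dμ) such that a(x) and b(x) are invertible for every x. Then ∫_X a(x)* log(a(x)*^{-1} b(x)* b(x) a(x)^{-1}) a(x) dμ(x) ≤ 0. -/

import Mathlib

open scoped ComplexOrder
open MeasureTheory Set Filter Topology

section Aux

variable {A : Type*} [CStarAlgebra A] [PartialOrder A] [StarOrderedRing A]

lemma aux_smul_nonneg {r : ℝ} (hr : 0 ≤ r) {x : A} (hx : 0 ≤ x) : 0 ≤ r • x := by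
  have h : r • x = star ((Real.sqrt r : ℝ) • (1 : A)) * x * ((Real.sqrt r : ℝ) • (1 : A)) := by
    simp [star_smul, smul_mul_assoc, mul_smul_comm, smul_smul, Real.mul_self_sqrt hr]
  rw [h]
  exact star_left_conjugate_nonneg hx _

lemma aux_integral_nonneg {X : Type*} [MeasurableSpace X] {μ : Measure X}
    {f : X → A} (hf : Integrable f μ) (h : ∀ x, 0 ≤ f x) :
    0 ≤ ∫ x, f x ∂μ := by
  borelize A
  have hsc : IsClosed {y : A | 0 ≤ y} := CStarAlgebra.isClosed_nonneg
  rcases hf.aestronglyMeasurable with ⟨g, hgm, hfg⟩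
  classical
  set g' : X → A := fun x => if 0 ≤ g x then g x else 0 with hg'_def
  have hg'm : StronglyMeasurable g' := by
    refine StronglyMeasurable.piecewise ?_ hgm stronglyMeasurable_const
    exact hgm.measurable hsc.measurableSet
  have hfg' : f =ᶠ[ae μ] g' := by
    filter_upwards [hfg] with x hx
    rw [hg'_def]
    simp only [← hx, h x, if_pos]
  have hg'_nonneg : ∀ x, 0 ≤ g' x := by
    intro x
    show (0:A) ≤ if 0 ≤ g x then g x else 0
    split_ifs with hx
    · exact hx
    · exact le_refl 0
  have hf' : Integrable g' μ := (integrable_congr hfg').mp hf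
  rw [integral_congr_ae hfg']
  set s₀ : Set A := range g' ∪ {0} with hs₀_def
  haveI : TopologicalSpace.SeparableSpace (s₀ : Set A) := by
    refine (TopologicalSpace.IsSeparable.union hg'm.isSeparable_range ?_).separableSpace
    exact (Set.finite_singleton 0).isSeparable
  have htend := tendsto_integral_approxOn_of_measurable_of_range_subset
    hg'm.measurable hf' s₀ Subset.rfl
  refine le_of_tendsto_of_tendsto tendsto_const_nhds htend (Eventually.of_forall fun n => ?_)
  show (0 : A) ≤ (SimpleFunc.approxOn g' hg'm.measurable s₀ 0 _ n).integral μ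
  rw [SimpleFunc.integral_eq]
  refine Finset.sum_nonneg fun y hy => ?_
  refine aux_smul_nonneg ENNReal.toReal_nonneg ?_
  rw [SimpleFunc.mem_range] at hy
  obtain ⟨x, rfl⟩ := hy
  have hmem : (SimpleFunc.approxOn g' hg'm.measurable s₀ 0 (Or.inr rfl) n) x ∈ s₀ :=
    SimpleFunc.approxOn_mem hg'm.measurable (Or.inr rfl) n x
  rcases hmem with hmem | hmem
  · obtain ⟨z, hz⟩ := hmem
    exact hz ▸ hg'_nonneg z
  · simp only [mem_singleton_iff] at hmem
    rw [hmem]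

end Aux

set_option maxHeartbeats 1000000 in
/-- The noncommutative information inequality: if `a, b : X → A` are norm-continuous,
norm-bounded densities (`∫ a* a dμ = 1 = ∫ b* b dμ`) with invertible values, then
`∫ a(x)* log(a(x)*⁻¹ b(x)* b(x) a(x)⁻¹) a(x) dμ(x) ≤ 0`. -/
theorem information_inequality {X : Type*} [TopologicalSpace X] [LocallyCompactSpace X]
    [T2Space X] [MeasurableSpace X] [BorelSpace X] (μ : Measure X)
    {A : Type*} [CStarAlgebra A] [PartialOrder A] [StarOrderedRing A]
    (a b : X → A) (ha_cont : Continuous a) (hb_cont : Continuous b)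
    (ha_bdd : ∃ C : ℝ, ∀ x, ‖a x‖ ≤ C) (hb_bdd : ∃ C : ℝ, ∀ x, ‖b x‖ ≤ C)
    (ha_inv : ∀ x, IsUnit (a x)) (hb_inv : ∀ x, IsUnit (b x))
    (ha_int : Integrable (fun x => star (a x) * a x) μ)
    (hb_int : Integrable (fun x => star (b x) * b x) μ)
    (ha_den : ∫ x, star (a x) * a x ∂μ = 1)
    (hb_den : ∫ x, star (b x) * b x ∂μ = 1)
    (h_int : Integrable (fun x =>
      star (a x) *
        cfc Real.log (Ring.inverse (star (a x)) * star (b x) * b x * Ring.inverse (a x)) *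
        a x) μ) :
    ∫ x, star (a x) *
        cfc Real.log (Ring.inverse (star (a x)) * star (b x) * b x * Ring.inverse (a x)) *
        a x ∂μ ≤ 0 := by
  set F : X → A := fun x =>
    star (a x) *
      cfc Real.log (Ring.inverse (star (a x)) * star (b x) * b x * Ring.inverse (a x)) *
      a x with hF_def
  set G : X → A := fun x => (star (b x) * b x) - (star (a x) * a x) with hG_def
  have hG_int : Integrable G μ := hb_int.sub ha_int
  -- pointwise bound F x ≤ G x
  have key : ∀ x, F x ≤ G x := by
    intro x
    set c : A := Ring.inverse (star (a x)) * star (b x) * b x * Ring.inverse (a x) with hc_def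
    have hua : IsUnit (a x) := ha_inv x
    have hub : IsUnit (b x) := hb_inv x
    have hc_eq : c = star (b x * Ring.inverse (a x)) * (b x * Ring.inverse (a x)) := by
      rw [hc_def, star_mul, Ring.inverse_star]
      simp [mul_assoc]
    have hc_nonneg : 0 ≤ c := hc_eq ▸ star_mul_self_nonneg _
    have hd : IsUnit (b x * Ring.inverse (a x)) := hub.mul hua.ringInverse
    have hc_unit : IsUnit c := by
      rw [hc_eq]
      exact hd.star.mul hd
    have hc_spec : ∀ t ∈ spectrum ℝ c, 0 < t := by
      intro t ht
      rcases lt_or_eq_of_le (spectrum_nonneg_of_nonneg hc_nonneg ht) with h | h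
      · exact h
      · exact absurd (h ▸ ht) (spectrum.zero_notMem ℝ hc_unit)
    -- log t ≤ t - 1 on spectrum
    have hsa : IsSelfAdjoint c := IsSelfAdjoint.of_nonneg hc_nonneg
    have hlog : cfc Real.log c ≤ cfc (fun t : ℝ => t - 1) c := by
      refine cfc_mono (fun t ht => ?_) ?_ ?_
      · have := Real.add_one_le_exp (Real.log t)
        rw [Real.exp_log (hc_spec t ht)] at this
        linarith
      · exact Real.continuousOn_log.mono fun t ht => ne_of_gt (hc_spec t ht)
      · fun_prop
    have hsub : cfc (fun t : ℝ => t - 1) c = c - 1 := by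
      have h1 : cfc (fun t : ℝ => t - 1) c
          = cfc (id : ℝ → ℝ) c - cfc (fun _ : ℝ => (1 : ℝ)) c :=
        cfc_sub (id : ℝ → ℝ) (fun _ : ℝ => (1 : ℝ)) c
      rw [h1, cfc_id ℝ c, cfc_const_one ℝ c]
    have hconj : star (a x) * cfc Real.log c * a x ≤ star (a x) * (c - 1) * a x := by
      rw [← hsub]
      exact star_left_conjugate_le_conjugate hlog _
    have hcomp : star (a x) * (c - 1) * a x = G x := by
      rw [hG_def, hc_def]
      have h1 : Ring.inverse (a x) * a x = 1 := Ring.inverse_mul_cancel _ hua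
      have h2 : star (a x) * Ring.inverse (star (a x)) = 1 :=
        Ring.mul_inverse_cancel _ hua.star
      calc star (a x) * (Ring.inverse (star (a x)) * star (b x) * b x * Ring.inverse (a x) - 1)
              * a x
          = (star (a x) * Ring.inverse (star (a x))) * star (b x) * b x
              * (Ring.inverse (a x) * a x) - star (a x) * a x := by noncomm_ring
        _ = star (b x) * b x - star (a x) * a x := by rw [h1, h2]; noncomm_ring
    calc F x = star (a x) * cfc Real.log c * a x := rfl
      _ ≤ star (a x) * (c - 1) * a x := hconj
      _ = G x := hcomp
  have h0 : 0 ≤ ∫ x, (G x - F x) ∂μ :=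
    aux_integral_nonneg (hG_int.sub h_int) fun x => sub_nonneg.mpr (key x)
  rw [integral_sub hG_int h_int] at h0
  have hGint : ∫ x, G x ∂μ = 0 := by
    rw [hG_def, integral_sub hb_int ha_int, ha_den, hb_den, sub_self]
  rw [hGint] at h0
  simpa using h0
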